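/- Let m₁, m₂, m₃, f, φ : ℝ → ℝ satisfy the geodesic Darboux system m₁' = m₃ − f, m₂' = φ·m₃, m₃' = −m₁ − φ·m₂ on ℝ, where m₁, m₂, m₃ are differentiable, f is twice differentiable, and φ is differentiable with φ(θ) ≠ 0 for all θ. Then m₁ is three times differentiable and satisfies the third-order equation (m₁''' + f'') − (φ'/φ)·(m₁'' + m₁ + f') + (1 + φ²)·m₁' + φ²·f = 0 on ℝ. -/

import Mathlib

/-- Geodesic case: the coefficients of the geodesic Darboux system give a
third-order ODE for `m₁` (paper's equation (9)). -/
theorem geodesic_third_order_ode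
    (m₁ m₂ m₃ f φ : ℝ → ℝ)
    (hm₁ : Differentiable ℝ m₁) (hm₂ : Differentiable ℝ m₂)
    (hm₃ : Differentiable ℝ m₃)
    (hf : Differentiable ℝ f) (hf' : Differentiable ℝ (deriv f))
    (hφ : Differentiable ℝ φ) (hφ0 : ∀ θ, φ θ ≠ 0)
    (h1 : ∀ θ, deriv m₁ θ = m₃ θ - f θ)
    (h2 : ∀ θ, deriv m₂ θ = φ θ * m₃ θ)
    (h3 : ∀ θ, deriv m₃ θ = -m₁ θ - φ θ * m₂ θ) :
    Differentiable ℝ (deriv m₁) ∧ Differentiable ℝ (deriv (deriv m₁)) ∧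
      ∀ θ, (deriv (deriv (deriv m₁)) θ + deriv (deriv f) θ)
          - (deriv φ θ / φ θ) * (deriv (deriv m₁) θ + m₁ θ + deriv f θ)
          + (1 + (φ θ) ^ 2) * deriv m₁ θ + (φ θ) ^ 2 * f θ = 0 := by
  have d1 : deriv m₁ = fun θ => m₃ θ - f θ := funext h1
  have hd1 : Differentiable ℝ (deriv m₁) := by rw [d1]; exact hm₃.sub hf
  have d2 : deriv (deriv m₁) = fun θ => -m₁ θ - φ θ * m₂ θ - deriv f θ := by
    rw [d1]
    funext θ
    show deriv (m₃ - f) θ = _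
    rw [deriv_sub (hm₃ θ) (hf θ), h3]
  have hd2 : Differentiable ℝ (deriv (deriv m₁)) := by
    rw [d2]
    exact ((hm₁.neg.sub (hφ.mul hm₂))).sub hf'
  refine ⟨hd1, hd2, fun θ => ?_⟩
  have d3 : deriv (deriv (deriv m₁)) θ
      = -(m₃ θ - f θ) - (deriv φ θ * m₂ θ + φ θ * (φ θ * m₃ θ)) - deriv (deriv f) θ := by
    rw [d2]
    show deriv (-m₁ - φ * m₂ - deriv f) θ = _
    rw [deriv_sub ((hm₁.neg.sub (hφ.mul hm₂)) θ) (hf' θ),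
      deriv_sub (hm₁.neg θ) ((hφ.mul hm₂) θ),
      deriv.neg, deriv_mul (hφ θ) (hm₂ θ),
      h1, h2]
  rw [d3, d2, h1]
  have hφθ := hφ0 θ
  field_simp
  ring
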